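/- The bicyclic monoid does not have rational word problem. -/

import Mathlib

/-- The monoid homomorphism `(A ⊕ A)* → A* × A*` sending `inl a ↦ (a, ε)` and
`inr a ↦ (ε, a)`, used to define rational (asynchronous two-tape) relations. -/
def twoTapeHom (A : Type) : FreeMonoid (A ⊕ A) →* FreeMonoid A × FreeMonoid A :=
  FreeMonoid.lift (Sum.elim (fun a => (FreeMonoid.of a, 1)) (fun a => (1, FreeMonoid.of a)))

/-- A relation `R ⊆ A* × A*` is rational if it is the image of a regular language
over the alphabet `A ⊕ A` under `twoTapeHom`; equivalently, it is recognised by a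
two-tape asynchronous finite automaton. -/
def IsRationalRel {A : Type} (R : Set (FreeMonoid A × FreeMonoid A)) : Prop :=
  ∃ L : Language (A ⊕ A), L.IsRegular ∧
    twoTapeHom A '' {w : FreeMonoid (A ⊕ A) | w.toList ∈ L} = R

/-- The canonical embedding of the free semigroup `A⁺` into the free monoid `A*`. -/
def freeSemigroupToWord {A : Type} : FreeSemigroup A →ₙ* FreeMonoid A :=
  FreeSemigroup.lift FreeMonoid.of

/-- The two-tape word problem `ι(S,A)` of a semigroup `S` with respect to a
(generating) map `f : A → S`: all pairs of nonempty words over `A` whose images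
in `S` coincide, viewed as a relation on words in `A*`. -/
def wordProblem {A S : Type} [Semigroup S] (f : A → S) :
    Set (FreeMonoid A × FreeMonoid A) :=
  {p | ∃ w₁ w₂ : FreeSemigroup A,
        FreeSemigroup.lift f w₁ = FreeSemigroup.lift f w₂ ∧
        p = (freeSemigroupToWord w₁, freeSemigroupToWord w₂)}

/-- A semigroup has rational word problem if it is generated by some finite set `A`
(i.e. there is `f : A → S` with the induced homomorphism `A⁺ → S` surjective) for
which the two-tape word problem is a rational relation. -/
def HasRationalWordProblem (S : Type) [Semigroup S] : Prop :=
  ∃ (A : Type) (_ : Fintype A) (f : A → S),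
    Function.Surjective ⇑(FreeSemigroup.lift f) ∧ IsRationalRel (wordProblem f)

/-- The bicyclic monoid `Mon⟨b, c | bc = 1⟩`, modelled as `ℕ × ℕ` where `(m, n)`
stands for `cᵐbⁿ`. -/
def Bicyclic : Type := ℕ × ℕ

/-- Multiplication of the bicyclic monoid: `cᵐbⁿ · cᵖbᑫ = c^(m + (p ∸ n)) b^(q + (n ∸ p))`. -/
def bmul (x y : ℕ × ℕ) : ℕ × ℕ := (x.1 + (y.1 - x.2), y.2 + (x.2 - y.1))

instance : Monoid Bicyclic where
  mul x y := bmul x y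
  one := ((0, 0) : ℕ × ℕ)
  mul_assoc x y z := by
    show bmul (bmul x y) z = bmul x (bmul y z)
    simp only [bmul, Prod.mk.injEq]
    omega
  one_mul x := by
    obtain ⟨a, b⟩ := x
    show bmul (0, 0) (a, b) = (a, b)
    simp only [bmul, Prod.mk.injEq]
    omega
  mul_one x := by
    obtain ⟨a, b⟩ := x
    show bmul (a, b) (0, 0) = (a, b)
    simp only [bmul, Prod.mk.injEq]
    omega


-- ===== auxiliary material for the proof =====

section Aux

def proj1 {A : Type} : List (A ⊕ A) → List A :=
  List.filterMap (Sum.elim some fun _ => none)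

def proj2 {A : Type} : List (A ⊕ A) → List A :=
  List.filterMap (Sum.elim (fun _ => none) some)

@[simp] lemma proj1_nil {A : Type} : proj1 ([] : List (A ⊕ A)) = [] := rfl
@[simp] lemma proj2_nil {A : Type} : proj2 ([] : List (A ⊕ A)) = [] := rfl
@[simp] lemma proj1_inl_cons {A : Type} (a : A) (l : List (A ⊕ A)) :
    proj1 (Sum.inl a :: l) = a :: proj1 l := rfl
@[simp] lemma proj1_inr_cons {A : Type} (a : A) (l : List (A ⊕ A)) :
    proj1 (Sum.inr a :: l) = proj1 l := rfl
@[simp] lemma proj2_inl_cons {A : Type} (a : A) (l : List (A ⊕ A)) :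
    proj2 (Sum.inl a :: l) = proj2 l := rfl
@[simp] lemma proj2_inr_cons {A : Type} (a : A) (l : List (A ⊕ A)) :
    proj2 (Sum.inr a :: l) = a :: proj2 l := rfl
@[simp] lemma proj1_append {A : Type} (l₁ l₂ : List (A ⊕ A)) :
    proj1 (l₁ ++ l₂) = proj1 l₁ ++ proj1 l₂ := List.filterMap_append
@[simp] lemma proj2_append {A : Type} (l₁ l₂ : List (A ⊕ A)) :
    proj2 (l₁ ++ l₂) = proj2 l₁ ++ proj2 l₂ := List.filterMap_append

lemma twoTapeHom_ofList {A : Type} (w : List (A ⊕ A)) :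
    twoTapeHom A (FreeMonoid.ofList w) =
      (FreeMonoid.ofList (proj1 w), FreeMonoid.ofList (proj2 w)) := by
  induction w with
  | nil => rfl
  | cons x l ih =>
    rw [FreeMonoid.ofList_cons, map_mul, ih]
    cases x with
    | inl a =>
      show (twoTapeHom A (FreeMonoid.of (Sum.inl a))) * _ = _
      rw [twoTapeHom, FreeMonoid.lift_eval_of]
      simp [Prod.mul_def, FreeMonoid.ofList_cons]
    | inr a =>
      show (twoTapeHom A (FreeMonoid.of (Sum.inr a))) * _ = _
      rw [twoTapeHom, FreeMonoid.lift_eval_of]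
      simp [Prod.mul_def, FreeMonoid.ofList_cons]

lemma split_proj1 {A : Type} :
    ∀ (w : List (A ⊕ A)) (b c : List A), proj1 w = b ++ c →
      ∃ w₁ w₂, w = w₁ ++ w₂ ∧ proj1 w₁ = b ∧ proj1 w₂ = c := by
  intro w
  induction w with
  | nil =>
    intro b c h
    simp only [proj1_nil] at h
    exact ⟨[], [], rfl, by simp [← (List.append_eq_nil_iff.mp h.symm).1],
      by simp [← (List.append_eq_nil_iff.mp h.symm).2]⟩
  | cons x l ih =>
    intro b c h
    cases b with
    | nil => exact ⟨[], x :: l, rfl, rfl, by simpa using h⟩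
    | cons a b' =>
      cases x with
      | inl a' =>
        rw [proj1_inl_cons, List.cons_append] at h
        injection h with hh h
        subst hh
        obtain ⟨w₁, w₂, rfl, h1, h2⟩ := ih _ _ h
        exact ⟨Sum.inl a' :: w₁, w₂, rfl, by simp [h1], h2⟩
      | inr a' =>
        rw [proj1_inr_cons] at h
        obtain ⟨w₁, w₂, rfl, h1, h2⟩ := ih _ _ h
        exact ⟨Sum.inr a' :: w₁, w₂, rfl, by simp [h1], h2⟩

lemma lift_freeSemigroupToWord {A : Type} {S : Type} [Monoid S] (f : A → S)
    (w : FreeSemigroup A) :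
    FreeMonoid.lift f (freeSemigroupToWord w) = FreeSemigroup.lift f w := by
  induction w using FreeSemigroup.recOnMul with
  | ih1 a =>
    rw [freeSemigroupToWord, FreeSemigroup.lift_of, FreeSemigroup.lift_of,
      FreeMonoid.lift_eval_of]
  | ih2 x y hx hy => rw [map_mul, map_mul, map_mul, hx, hy]

lemma toList_freeSemigroupToWord_ne_nil {A : Type} (w : FreeSemigroup A) :
    (freeSemigroupToWord w).toList ≠ [] := by
  induction w using FreeSemigroup.recOnMul with
  | ih1 a => simp [freeSemigroupToWord, FreeSemigroup.lift_of]
  | ih2 x y hx hy =>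
    rw [map_mul, FreeMonoid.toList_mul]
    simp only [ne_eq, List.append_eq_nil_iff]
    tauto

/-- Nonempty lists into the free semigroup. -/
def listToFS {A : Type} : A → List A → FreeSemigroup A
  | a, [] => FreeSemigroup.of a
  | a, b :: l => FreeSemigroup.of a * listToFS b l

lemma freeSemigroupToWord_listToFS {A : Type} (a : A) (l : List A) :
    freeSemigroupToWord (listToFS a l) = FreeMonoid.ofList (a :: l) := by
  induction l generalizing a with
  | nil =>
    rw [listToFS, freeSemigroupToWord, FreeSemigroup.lift_of, FreeMonoid.ofList_singleton]
  | cons b l ih =>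
    rw [listToFS, map_mul, ih, FreeMonoid.ofList_cons, freeSemigroupToWord,
      FreeSemigroup.lift_of, FreeMonoid.ofList_cons, FreeMonoid.ofList_cons]

lemma mem_wordProblem_of_lift_eq {A S : Type} [Monoid S] {f : A → S}
    {u v : FreeMonoid A} (hu : u.toList ≠ []) (hv : v.toList ≠ [])
    (h : FreeMonoid.lift f u = FreeMonoid.lift f v) : (u, v) ∈ wordProblem f := by
  obtain ⟨a, l, hl⟩ := List.exists_cons_of_ne_nil hu
  obtain ⟨b, m, hm⟩ := List.exists_cons_of_ne_nil hv
  have hu' : u = freeSemigroupToWord (listToFS a l) := by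
    rw [freeSemigroupToWord_listToFS, ← hl, FreeMonoid.ofList_toList]
  have hv' : v = freeSemigroupToWord (listToFS b m) := by
    rw [freeSemigroupToWord_listToFS, ← hm, FreeMonoid.ofList_toList]
  refine ⟨listToFS a l, listToFS b m, ?_, by rw [hu', hv']⟩
  rw [← lift_freeSemigroupToWord, ← lift_freeSemigroupToWord, ← hu', ← hv', h]

lemma lift_eq_of_mem_wordProblem {A S : Type} [Monoid S] {f : A → S}
    {u v : FreeMonoid A} (h : (u, v) ∈ wordProblem f) :
    FreeMonoid.lift f u = FreeMonoid.lift f v := by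
  obtain ⟨w₁, w₂, he, hp⟩ := h
  obtain ⟨h1, h2⟩ := Prod.mk.injEq .. ▸ hp
  rw [h1, h2, lift_freeSemigroupToWord, lift_freeSemigroupToWord, he]

lemma bicyclic_mul_def (x y : Bicyclic) : x * y = bmul x y := rfl

lemma bicyclic_pow_b (i : ℕ) :
    (show Bicyclic from ((0, 1) : ℕ × ℕ)) ^ i = (show Bicyclic from ((0, i) : ℕ × ℕ)) := by
  induction i with
  | zero => rfl
  | succ n ih =>
    rw [pow_succ, ih, bicyclic_mul_def]
    show bmul (0, n) (0, 1) = ((0, n + 1) : ℕ × ℕ)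
    first
      | (simp only [bmul, Prod.mk.injEq]; omega)
      | simp only [bmul, Prod.mk.injEq]

lemma bicyclic_pow_c (i : ℕ) :
    (show Bicyclic from ((1, 0) : ℕ × ℕ)) ^ i = (show Bicyclic from ((i, 0) : ℕ × ℕ)) := by
  induction i with
  | zero => rfl
  | succ n ih =>
    rw [pow_succ, ih, bicyclic_mul_def]
    show bmul (n, 0) (1, 0) = ((n + 1, 0) : ℕ × ℕ)
    first
      | (simp only [bmul, Prod.mk.injEq]; omega)
      | simp only [bmul, Prod.mk.injEq]

end Aux

/-- The bicyclic monoid does not have rational word problem. -/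
theorem bicyclic_not_hasRationalWordProblem : ¬ HasRationalWordProblem Bicyclic := by
  rintro ⟨A, _, f, hsurj, L, hreg, hR⟩
  obtain ⟨σ, _, M, hM⟩ := hreg
  obtain ⟨β, hβ⟩ := hsurj (show Bicyclic from ((0, 1) : ℕ × ℕ))
  obtain ⟨γ, hγ⟩ := hsurj (show Bicyclic from ((1, 0) : ℕ × ℕ))
  set g : FreeMonoid A →* Bicyclic := FreeMonoid.lift f with hg
  set B : FreeMonoid A := freeSemigroupToWord β with hB
  set C : FreeMonoid A := freeSemigroupToWord γ with hC
  have hgB : g B = (show Bicyclic from ((0, 1) : ℕ × ℕ)) := by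
    rw [hB, hg, lift_freeSemigroupToWord, hβ]
  have hgC : g C = (show Bicyclic from ((1, 0) : ℕ × ℕ)) := by
    rw [hC, hg, lift_freeSemigroupToWord, hγ]
  -- image of B^i * C^j in the bicyclic monoid
  have himg : ∀ i j : ℕ, g (B ^ i * C ^ j) = (show Bicyclic from ((j - i, i - j) : ℕ × ℕ)) := by
    intro i j
    rw [map_mul, map_pow, map_pow, hgB, hgC, bicyclic_pow_b, bicyclic_pow_c, bicyclic_mul_def]
    show bmul (0, i) (j, 0) = ((j - i, i - j) : ℕ × ℕ)
    first
      | (simp only [bmul, Prod.mk.injEq]; omega)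
      | simp only [bmul, Prod.mk.injEq]
  -- nonemptiness of the words involved
  have hBne : B.toList ≠ [] := toList_freeSemigroupToWord_ne_nil β
  have hCne : C.toList ≠ [] := toList_freeSemigroupToWord_ne_nil γ
  have hne : ∀ i j : ℕ, (B ^ (i + 1) * C ^ (j + 1)).toList ≠ [] := by
    intro i j
    rw [pow_succ', mul_assoc, FreeMonoid.toList_mul]
    simp only [ne_eq, List.append_eq_nil_iff]
    tauto
  set V : FreeMonoid A := B * C with hV
  have hVne : V.toList ≠ [] := by
    rw [hV, FreeMonoid.toList_mul]
    simp only [ne_eq, List.append_eq_nil_iff]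
    tauto
  have hgV : g V = (show Bicyclic from ((0, 0) : ℕ × ℕ)) := by
    have := himg 1 1
    simpa [hV] using this
  -- for every n, the pair (B^(n+1) * C^(n+1), V) is in the word problem, hence
  -- is produced by an accepted word of the automaton; split that word at
  -- the point where the first tape finishes producing B^(n+1).
  have key : ∀ n : ℕ, ∃ w₁ w₂ : List (A ⊕ A),
      (w₁ ++ w₂) ∈ M.accepts ∧ proj1 w₁ = (B ^ (n + 1)).toList ∧
      proj1 w₂ = (C ^ (n + 1)).toList ∧ proj2 w₁ ++ proj2 w₂ = V.toList := by
    intro n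
    have hmem : (B ^ (n + 1) * C ^ (n + 1), V) ∈ wordProblem f := by
      apply mem_wordProblem_of_lift_eq (hne n n) hVne
      rw [← hg]
      rw [himg n.succ n.succ, hgV]
      simp
      rfl
    rw [← hR] at hmem
    obtain ⟨w, hwL, hww⟩ := hmem
    have hw' : twoTapeHom A (FreeMonoid.ofList w.toList) =
        (FreeMonoid.ofList (proj1 w.toList), FreeMonoid.ofList (proj2 w.toList)) :=
      twoTapeHom_ofList w.toList
    rw [FreeMonoid.ofList_toList, hww] at hw'
    have hw1 : proj1 w.toList = (B ^ (n + 1)).toList ++ (C ^ (n + 1)).toList := by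
      have := congrArg (fun p => FreeMonoid.toList p.1) hw'
      simpa [FreeMonoid.toList_mul] using this.symm
    have hw2 : proj2 w.toList = V.toList := by
      have := congrArg (fun p => FreeMonoid.toList p.2) hw'
      simpa using this.symm
    obtain ⟨w₁, w₂, hsplit, h1, h2⟩ := split_proj1 w.toList _ _ hw1
    refine ⟨w₁, w₂, ?_, h1, h2, ?_⟩
    · rw [← hsplit]; rw [hM]; exact hwL
    · rw [← proj2_append, ← hsplit, hw2]
  choose w₁ w₂ hacc hp1 hp2 hp12 using key
  -- pigeonhole on (state reached after w₁, amount of second tape produced by w₁)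
  have hlen : ∀ n : ℕ, (proj2 (w₁ n)).length < V.toList.length + 1 := by
    intro n
    have := congrArg List.length (hp12 n)
    rw [List.length_append] at this
    omega
  have : ∃ n m : ℕ, n ≠ m ∧
      (fun n => ((M.eval (w₁ n) : σ), (⟨(proj2 (w₁ n)).length, hlen n⟩ : Fin (V.toList.length + 1)))) n =
      (fun n => ((M.eval (w₁ n) : σ), (⟨(proj2 (w₁ n)).length, hlen n⟩ : Fin (V.toList.length + 1)))) m :=
    Finite.exists_ne_map_eq_of_infinite _
  obtain ⟨n, m, hnm, heq⟩ := this
  simp only [Prod.mk.injEq, Fin.mk.injEq] at heq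
  obtain ⟨hstate, hlen2⟩ := heq
  -- the second-tape outputs of w₁ n and w₁ m coincide
  have hproj2eq : proj2 (w₁ n) = proj2 (w₁ m) :=
    (List.append_inj ((hp12 n).trans (hp12 m).symm) hlen2).1
  -- the swapped word w₁ n ++ w₂ m is accepted
  have hacc' : (w₁ n ++ w₂ m) ∈ M.accepts := by
    have h1 : M.eval (w₁ n ++ w₂ m) = M.evalFrom (M.eval (w₁ n)) (w₂ m) :=
      M.evalFrom_of_append M.start _ _
    have h2 : M.eval (w₁ m ++ w₂ m) = M.evalFrom (M.eval (w₁ m)) (w₂ m) :=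
      M.evalFrom_of_append M.start _ _
    rw [DFA.mem_accepts, h1, hstate, ← h2, ← DFA.mem_accepts]
    exact hacc m
  -- and it witnesses (B^(n+1) * C^(m+1), V) ∈ wordProblem f
  have hmem : (B ^ (n + 1) * C ^ (m + 1), V) ∈ wordProblem f := by
    rw [← hR]
    refine ⟨FreeMonoid.ofList (w₁ n ++ w₂ m), ?_, ?_⟩
    · show (FreeMonoid.ofList (w₁ n ++ w₂ m)).toList ∈ L
      rw [FreeMonoid.toList_ofList, ← hM]
      exact hacc'
    · rw [twoTapeHom_ofList, proj1_append, proj2_append, hp1, hp2, hproj2eq, hp12,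
        ← FreeMonoid.toList_mul, FreeMonoid.ofList_toList, FreeMonoid.ofList_toList]
  have := lift_eq_of_mem_wordProblem hmem
  rw [← hg, himg, hgV] at this
  have : ((m + 1 - (n + 1), n + 1 - (m + 1)) : ℕ × ℕ) = ((0, 0) : ℕ × ℕ) := this
  rw [Prod.mk.injEq] at this
  omega
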